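/- For every x ∈ E one has ‖H(x)‖ ≤ 1; if μ({x}) = 0 then f is Fréchet differentiable at x with derivative v ↦ ⟨v, H(x)⟩ (i.e., the gradient of f at x equals H(x)); and H is continuous at every point of the complement of the support of μ. -/

import Mathlib

open MeasureTheory Metric
set_option maxHeartbeats 1000000

lemma aux_hasFDerivAt_norm {E : Type*} [NormedAddCommGroup E] [InnerProductSpace ℝ E]
    {x : E} (hx : x ≠ 0) : HasFDerivAt (fun y : E => ‖y‖) ((innerSL ℝ) (‖x‖⁻¹ • x)) x := by
  have hin : (inner ℝ x x : ℝ) ≠ 0 := inner_self_ne_zero.2 hx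
  have h1 : HasFDerivAt (fun y : E => (inner ℝ y y : ℝ))
      ((fderivInnerCLM ℝ (x, x)).comp
        ((ContinuousLinearMap.id ℝ E).prod (ContinuousLinearMap.id ℝ E))) x :=
    (hasFDerivAt_id x).inner ℝ (hasFDerivAt_id x)
  have h2 : HasFDerivAt (fun y : E => Real.sqrt (inner ℝ y y : ℝ))
      ((1 / (2 * Real.sqrt (inner ℝ x x : ℝ))) • ((fderivInnerCLM ℝ (x, x)).comp
        ((ContinuousLinearMap.id ℝ E).prod (ContinuousLinearMap.id ℝ E)))) x :=
    HasDerivAt.comp_hasFDerivAt (f := fun y : E => (inner ℝ y y : ℝ)) x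
      (Real.hasDerivAt_sqrt hin) h1
  have hfun : (fun y : E => Real.sqrt (inner ℝ y y : ℝ)) = fun y : E => ‖y‖ := by
    funext y
    rw [real_inner_self_eq_norm_mul_norm, Real.sqrt_mul_self (norm_nonneg y)]
  rw [hfun] at h2
  refine h2.congr_fderiv ?_
  ext v
  have hnx : ‖x‖ ≠ 0 := norm_ne_zero_iff.2 hx
  simp [real_inner_smul_left, real_inner_self_eq_norm_mul_norm,
    Real.sqrt_mul_self (norm_nonneg x), real_inner_comm x v, fderivInnerCLM_apply]
  field_simp
  ring

lemma aux_hasFDerivAt_norm_sub {E : Type*} [NormedAddCommGroup E] [InnerProductSpace ℝ E]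
    (p : E) {x : E} (hx : x ≠ p) :
    HasFDerivAt (fun y : E => ‖y - p‖) ((innerSL ℝ) (‖x - p‖⁻¹ • (x - p))) x := by
  have := (aux_hasFDerivAt_norm (sub_ne_zero.2 hx)).comp x ((hasFDerivAt_id x).sub_const p)
  exact this

lemma aux_norm_le_one {E : Type*} [NormedAddCommGroup E] [NormedSpace ℝ E] (y : E) :
    ‖(‖y‖)⁻¹ • y‖ ≤ 1 := by
  rcases eq_or_ne y 0 with h | h
  · simp [h]
  · rw [norm_smul, norm_inv, norm_norm, inv_mul_cancel₀ (norm_ne_zero_iff.2 h)]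

abbrev Eu (n : ℕ) : Type := EuclideanSpace ℝ (Fin n)

/-- Euclidean case of Proposition 2.4, remaining assertions.
`‖H x‖ ≤ 1` for all `x`; if `μ{x} = 0` then `f` is Fréchet differentiable at `x` with
derivative `v ↦ ⟪v, H x⟫` (gradient `H x`); and `H` is continuous outside the support
of `μ`. -/
theorem stmt2 {n : ℕ} (hn : 1 ≤ n) (a : EuclideanSpace ℝ (Fin n)) (ρ : ℝ) (hρ : 0 < ρ)
    (μ : Measure (EuclideanSpace ℝ (Fin n))) [IsProbabilityMeasure μ]
    (hsupp : {x : EuclideanSpace ℝ (Fin n) | ∀ U ∈ nhds x, 0 < μ U} ⊆ ball a ρ)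
    (f : EuclideanSpace ℝ (Fin n) → ℝ)
    (hf : ∀ x, f x = ∫ p, ‖x - p‖ ∂μ)
    (H : EuclideanSpace ℝ (Fin n) → EuclideanSpace ℝ (Fin n))
    (hH : ∀ x, H x = ∫ p in ({x}ᶜ : Set (EuclideanSpace ℝ (Fin n))), ‖x - p‖⁻¹ • (x - p) ∂μ) :
    (∀ x, ‖H x‖ ≤ 1) ∧
    (∀ x, μ {x} = 0 → HasFDerivAt f ((innerSL ℝ) (H x)) x) ∧
    (∀ x, x ∉ {y : EuclideanSpace ℝ (Fin n) | ∀ U ∈ nhds y, 0 < μ U} → ContinuousAt H x) := by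
  -- measurability of the unit-vector field
  have hmeas : ∀ x : (Eu n), Measurable (fun p : (Eu n) => (‖x - p‖)⁻¹ • (x - p)) := fun x =>
    ((measurable_const.sub measurable_id).norm.inv).smul (measurable_const.sub measurable_id)
  -- the complement of the support is null
  have hnull : μ ({y : (Eu n) | ∀ U ∈ nhds y, 0 < μ U}ᶜ) = 0 := by
    apply measure_null_of_locally_null
    intro x hx
    simp only [Set.mem_compl_iff, Set.mem_setOf_eq, not_forall] at hx
    obtain ⟨U, hU, hU0⟩ := hx
    exact ⟨U, mem_nhdsWithin_of_mem_nhds hU, by simpa using (not_lt.1 hU0)⟩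
  have hae_ball : ∀ᵐ p ∂μ, p ∈ ball a ρ := by
    filter_upwards [mem_ae_iff.2 hnull] with p hp
    exact hsupp hp
  -- Part 1
  have part1 : ∀ x : (Eu n), ‖H x‖ ≤ 1 := by
    intro x
    rw [hH x]
    calc ‖∫ p in ({x}ᶜ : Set (Eu n)), ‖x - p‖⁻¹ • (x - p) ∂μ‖
        ≤ 1 * (μ ({x}ᶜ : Set (Eu n))).toReal := by
          apply norm_setIntegral_le_of_norm_le_const (measure_lt_top _ _)
          intro p _
          exact aux_norm_le_one (x - p)
      _ ≤ 1 := by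
          rw [one_mul]
          exact ENNReal.toReal_le_of_le_ofReal zero_le_one
            (by simpa using (prob_le_one (μ := μ) (s := ({x}ᶜ : Set (Eu n)))))
  refine ⟨part1, ?_, ?_⟩
  · -- Part 2 : differentiability
    intro x hx0
    have hcompl : ∀ g : (Eu n) → (Eu n), ∫ p in ({x}ᶜ : Set (Eu n)), g p ∂μ = ∫ p, g p ∂μ := by
      intro g
      have huniv : ({x}ᶜ : Set (Eu n)) =ᵐ[μ] (Set.univ : Set (Eu n)) :=
        ae_eq_univ.2 (by simpa using hx0)
      rw [setIntegral_congr_set huniv, setIntegral_univ]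
    have hgint : Integrable (fun p : (Eu n) => (‖x - p‖)⁻¹ • (x - p)) μ := by
      refine Integrable.mono' (integrable_const 1) (hmeas x).aestronglyMeasurable ?_
      exact Filter.Eventually.of_forall fun p => aux_norm_le_one (x - p)
    have hF_int : Integrable (fun p : (Eu n) => ‖x - p‖) μ := by
      refine Integrable.mono' (integrable_const (‖x‖ + ‖a‖ + ρ))
        ((continuous_const.sub continuous_id).norm).aestronglyMeasurable ?_
      filter_upwards [hae_ball] with p hp
      have hpn : ‖p‖ ≤ ‖a‖ + ρ := by
        have h1 := mem_ball_iff_norm.1 hp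
        have h2 : ‖p - a‖ < ρ := by rwa [← norm_sub_rev a p] at h1
        calc ‖p‖ = ‖a + (p - a)‖ := by rw [show a + (p - a) = p from by abel]
          _ ≤ ‖a‖ + ‖p - a‖ := norm_add_le _ _
          _ ≤ ‖a‖ + ρ := by linarith
      calc ‖(‖x - p‖ : ℝ)‖ = ‖x - p‖ := norm_norm _
        _ ≤ ‖x‖ + ‖p‖ := norm_sub_le _ _
        _ ≤ ‖x‖ + (‖a‖ + ρ) := by linarith
        _ = ‖x‖ + ‖a‖ + ρ := by ring
    have hF'_meas : AEStronglyMeasurable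
        (fun p : (Eu n) => (innerSL ℝ) ((‖x - p‖)⁻¹ • (x - p))) μ :=
      (innerSL ℝ : (Eu n) →L[ℝ] (Eu n) →L[ℝ] ℝ).continuous.comp_aestronglyMeasurable
        (hmeas x).aestronglyMeasurable
    have h_lip : ∀ᵐ p ∂μ, ∀ y ∈ ball x 1,
        ‖(‖y - p‖ : ℝ) - ‖x - p‖‖ ≤ (1 : ℝ) * ‖y - x‖ := by
      refine Filter.Eventually.of_forall fun p y _ => ?_
      rw [one_mul, Real.norm_eq_abs]
      have hsub : (y - p) - (x - p) = y - x := by abel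
      calc |‖y - p‖ - ‖x - p‖| ≤ ‖(y - p) - (x - p)‖ := abs_norm_sub_norm_le _ _
        _ = ‖y - x‖ := by rw [hsub]
    have h_diff : ∀ᵐ p ∂μ, HasFDerivAt (fun y : (Eu n) => ‖y - p‖)
        ((innerSL ℝ) ((‖x - p‖)⁻¹ • (x - p))) x := by
      have hne : ∀ᵐ p ∂μ, p ≠ x := by
        rw [ae_iff]
        simpa using hx0
      filter_upwards [hne] with p hp
      exact aux_hasFDerivAt_norm_sub p (Ne.symm hp)
    obtain ⟨-, hderiv⟩ := hasFDerivAt_integral_of_dominated_loc_of_lip'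
      (F := fun (y : (Eu n)) (p : (Eu n)) => ‖y - p‖)
      (F' := fun p : (Eu n) => (innerSL ℝ) ((‖x - p‖)⁻¹ • (x - p)))
      (bound := fun _ : (Eu n) => (1 : ℝ)) (μ := μ) (x₀ := x) (ball_mem_nhds x one_pos)
      (fun y _ => ((continuous_const.sub continuous_id).norm).aestronglyMeasurable)
      hF_int hF'_meas h_lip (integrable_const 1) h_diff
    have hfeq : f = fun y : (Eu n) => ∫ p, ‖y - p‖ ∂μ := funext hf
    have hint_eq : ∫ p, (innerSL ℝ) ((‖x - p‖)⁻¹ • (x - p)) ∂μ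
        = (innerSL ℝ) (H x) := by
      rw [hH x, hcompl]
      exact ((innerSL ℝ : (Eu n) →L[ℝ] (Eu n) →L[ℝ] ℝ).integral_comp_comm hgint)
    rw [hfeq, ← hint_eq]
    exact hderiv
  · -- Part 3 : continuity off the support
    intro x hx
    simp only [Set.mem_setOf_eq, not_forall] at hx
    obtain ⟨U, hU, hU0⟩ := hx
    replace hU0 : μ U = 0 := by simpa using (not_lt.1 hU0)
    obtain ⟨r, hr, hrU⟩ := Metric.mem_nhds_iff.1 hU
    have hball0 : μ (ball x r) = 0 := measure_mono_null hrU hU0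
    -- H agrees with the full integral near x
    have hEq : ∀ y ∈ ball x r, H y = ∫ p, (‖y - p‖)⁻¹ • (y - p) ∂μ := by
      intro y hy
      have h0 : μ {y} = 0 :=
        measure_mono_null (Set.singleton_subset_iff.2 hy) hball0
      have huniv : ({y}ᶜ : Set (Eu n)) =ᵐ[μ] (Set.univ : Set (Eu n)) :=
        ae_eq_univ.2 (by simpa using h0)
      rw [hH y, setIntegral_congr_set huniv, setIntegral_univ]
    have hcont : ContinuousAt (fun y : (Eu n) => ∫ p, (‖y - p‖)⁻¹ • (y - p) ∂μ) x := by
      apply continuousAt_of_dominated (bound := fun _ : (Eu n) => (1 : ℝ))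
      · exact Filter.Eventually.of_forall fun y => (hmeas y).aestronglyMeasurable
      · exact Filter.Eventually.of_forall fun y =>
          Filter.Eventually.of_forall fun p => aux_norm_le_one (y - p)
      · exact integrable_const 1
      · have hae : ∀ᵐ p ∂μ, p ∉ ball x r := by
          rw [ae_iff]; simpa [Metric.ball] using hball0
        filter_upwards [hae] with p hp
        have hxp : x - p ≠ 0 := by
          intro h
          obtain rfl := (sub_eq_zero.1 h).symm
          exact hp (mem_ball_self hr)
        have h1 : ContinuousAt (fun y : (Eu n) => y - p) x :=
          (continuous_id.sub continuous_const).continuousAt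
        exact (h1.norm.inv₀ (norm_ne_zero_iff.2 hxp)).smul h1
    apply hcont.congr
    filter_upwards [ball_mem_nhds x hr] with y hy
    exact (hEq y hy).symm
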